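/- Stanley–Reisner complexes of polarizations of primary monomial ideals are vertex-decomposable. -/

import Mathlib

open MvPolynomial

structure SComplex (V : Type*) where
  faces : Set (Finset V)
  down_closed : ∀ {F G : Finset V}, F ∈ faces → G ⊆ F → G ∈ faces

namespace SComplex

variable {V : Type*} [DecidableEq V]

def del (K : SComplex V) (x : V) : SComplex V where
  faces := {F | F ∈ K.faces ∧ x ∉ F}
  down_closed := fun hF hG => ⟨K.down_closed hF.1 hG, fun hx => hF.2 (hG hx)⟩

def link (K : SComplex V) (x : V) : SComplex V where
  faces := {F | F ∈ K.faces ∧ x ∉ F ∧ insert x F ∈ K.faces}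
  down_closed := fun hF hG =>
    ⟨K.down_closed hF.1 hG, fun hx => hF.2.1 (hG hx),
      K.down_closed hF.2.2 (Finset.insert_subset_insert _ hG)⟩

inductive VDec : SComplex V → ℕ → Prop where
  | simplex (K : SComplex V) (S : Finset V) (d : ℕ) (hcard : S.card = d)
      (hf : K.faces = {F | F ⊆ S}) : VDec K d
  | step (K : SComplex V) (d : ℕ) (x : V)
      (hpure : ∀ F ∈ K.faces, ∃ G ∈ K.faces, F ⊆ G ∧ G.card = d)
      (hlink : VDec (K.link x) (d - 1))
      (hdel : VDec (K.del x) d) : VDec K d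

def VertexDecomposable (K : SComplex V) : Prop := ∃ d, VDec K d

end SComplex

variable (k : Type*) [Field k] {c : ℕ} (n : Fin c → ℕ)

def polSupp (g : Fin c → ℕ) : Finset ((i : Fin c) × Fin (n i)) :=
  Finset.univ.filter fun v => (v.2 : ℕ) < g v.1

/-! ### Auxiliary material -/

theorem SComplex.ext_faces {V : Type*} {K₁ K₂ : SComplex V} (h : K₁.faces = K₂.faces) :
    K₁ = K₂ := by
  cases K₁; cases K₂; simpa using h

section Aux

/-- exponent vector of the variable `x_{i₀}`. -/
def eVec (i₀ : Fin c) : Fin c → ℕ := fun j => if j = i₀ then 1 else 0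

/-- the (possibly shifted) box of polarizing variables of the monomial `x^g`,
shifted by offsets `t`. -/
def PBox (t g : Fin c → ℕ) : Finset ((i : Fin c) × Fin (n i)) :=
  Finset.univ.filter fun v => t v.1 ≤ (v.2 : ℕ) ∧ (v.2 : ℕ) < t v.1 + g v.1

lemma mem_PBox {t g : Fin c → ℕ} {v : (i : Fin c) × Fin (n i)} :
    v ∈ PBox n t g ↔ t v.1 ≤ (v.2 : ℕ) ∧ (v.2 : ℕ) < t v.1 + g v.1 := by
  simp [PBox]

lemma PBox_mono {t g g' : Fin c → ℕ} (h : ∀ i, g i ≤ g' i) :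
    PBox n t g ⊆ PBox n t g' := by
  intro v hv
  rw [mem_PBox] at hv ⊢
  have := h v.1
  omega

/-- the (shifted) polarization complex of the set `A` of exponent vectors. -/
def KC (t : Fin c → ℕ) (A : Finset (Fin c → ℕ)) : SComplex ((i : Fin c) × Fin (n i)) where
  faces := {F | (∀ v ∈ F, t v.1 ≤ (v.2 : ℕ)) ∧ ∀ g ∈ A, ¬ PBox n t g ⊆ F}
  down_closed := fun {F G} hF hG =>
    ⟨fun v hv => hF.1 v (hG hv), fun g hg hsub => hF.2 g hg (hsub.trans hG)⟩

lemma mem_KC {t : Fin c → ℕ} {A : Finset (Fin c → ℕ)} {F : Finset ((i : Fin c) × Fin (n i))} :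
    F ∈ (KC n t A).faces ↔
      (∀ v ∈ F, t v.1 ≤ (v.2 : ℕ)) ∧ ∀ g ∈ A, ¬ PBox n t g ⊆ F := Iff.rfl

lemma card_filter_le_fin (m a : ℕ) :
    ((Finset.univ : Finset (Fin m)).filter fun j : Fin m => a ≤ (j : ℕ)).card = m - a := by
  have he : ((Finset.univ : Finset (Fin m)).filter fun j : Fin m => a ≤ (j : ℕ)) =
      (Finset.Ico a m).attachFin (fun x hx => (Finset.mem_Ico.mp hx).2) := by
    ext j
    simp only [Finset.mem_filter, Finset.mem_univ, true_and, Finset.mem_attachFin,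
      Finset.mem_Ico]
    omega
  rw [he, Finset.card_attachFin, Nat.card_Ico]

lemma filter_sigma_card (p : ∀ i : Fin c, Fin (n i) → Prop) [∀ i j, Decidable (p i j)] :
    ((Finset.univ : Finset ((i : Fin c) × Fin (n i))).filter fun v => p v.1 v.2).card
      = ∑ i, ((Finset.univ : Finset (Fin (n i))).filter fun j => p i j).card := by
  rw [← Finset.card_sigma]
  congr 1
  ext v
  simp [Finset.mem_sigma]

lemma sum_sub_one {f : Fin c → ℕ} (h : ∀ i, 1 ≤ f i) :
    ∑ i, (f i - 1) = (∑ i, f i) - c := by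
  have h1 : ∑ i, f i = ∑ i, ((f i - 1) + 1) := Finset.sum_congr rfl fun i _ => by
    have := h i; omega
  rw [h1, Finset.sum_add_distrib]
  simp

lemma KC_pure (t : Fin c → ℕ) (A : Finset (Fin c → ℕ))
    (hb : ∀ g ∈ A, ∀ i, t i + g i ≤ n i)
    (hprim : ∀ i, ∃ g ∈ A, (∀ j, j ≠ i → g j = 0) ∧ g i ≠ 0) :
    ∀ F ∈ (KC n t A).faces, ∃ G ∈ (KC n t A).faces, F ⊆ G ∧
      G.card = (∑ i, (n i - t i)) - c := by
  intro F hF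
  rw [mem_KC] at hF
  have hex : ∀ i : Fin c, ((Finset.univ : Finset (Fin (n i))).filter
      (fun j : Fin (n i) => t i ≤ (j : ℕ) ∧ (⟨i, j⟩ : (i : Fin c) × Fin (n i)) ∉ F)).Nonempty := by
    intro i
    obtain ⟨g, hg, hgp, hgi⟩ := hprim i
    rw [Finset.filter_nonempty_iff]
    by_contra hcon
    push_neg at hcon
    refine hF.2 g hg ?_
    rintro ⟨i', j⟩ hv
    rw [mem_PBox] at hv
    dsimp only at hv
    by_cases hii : i' = i
    · subst hii
      exact hcon j (Finset.mem_univ j) hv.1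
    · have := hgp i' hii
      omega
  set jf : ∀ i : Fin c, Fin (n i) := fun i =>
    (((Finset.univ : Finset (Fin (n i))).filter
      (fun j : Fin (n i) => t i ≤ (j : ℕ) ∧ (⟨i, j⟩ : (i : Fin c) × Fin (n i)) ∉ F)).min' (hex i)) with hjfdef
  have hjf : ∀ i, t i ≤ ((jf i : Fin (n i)) : ℕ) ∧ (⟨i, jf i⟩ : (i : Fin c) × Fin (n i)) ∉ F := by
    intro i
    have := Finset.min'_mem _ (hex i)
    rw [Finset.mem_filter] at this
    exact this.2
  have hjmin : ∀ (i : Fin c) (j : Fin (n i)), t i ≤ (j : ℕ) → (j : ℕ) < (jf i : ℕ) →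
      (⟨i, j⟩ : (i : Fin c) × Fin (n i)) ∈ F := by
    intro i j h1 h2
    by_contra hc
    have hmem : j ∈ ((Finset.univ : Finset (Fin (n i))).filter
        (fun j : Fin (n i) => t i ≤ (j : ℕ) ∧ (⟨i, j⟩ : (i : Fin c) × Fin (n i)) ∉ F)) := by
      rw [Finset.mem_filter]; exact ⟨Finset.mem_univ _, h1, hc⟩
    have hle := Finset.min'_le _ _ hmem
    rw [Fin.le_def] at hle
    simp only [hjfdef] at h2
    omega
  refine ⟨Finset.univ.filter fun v => t v.1 ≤ (v.2 : ℕ) ∧ v.2 ≠ jf v.1, ?_, ?_, ?_⟩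
  · rw [mem_KC]
    constructor
    · intro v hv
      rw [Finset.mem_filter] at hv
      exact hv.2.1
    · intro g hg hsub
      refine hF.2 g hg ?_
      rintro ⟨i, j⟩ hv
      have hvG := hsub hv
      rw [Finset.mem_filter] at hvG
      rw [mem_PBox] at hv
      dsimp only at hvG hv
      have hne' : (j : ℕ) ≠ ((jf i : Fin (n i)) : ℕ) := fun h =>
        hvG.2.2 (Fin.ext h)
      rcases lt_or_gt_of_ne hne' with hlt | hgt
      · exact hjmin i j hv.1 hlt
      · exfalso
        have hmem : (⟨i, jf i⟩ : (i : Fin c) × Fin (n i)) ∈ PBox n t g := by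
          rw [mem_PBox]
          dsimp only
          have := (hjf i).1
          exact ⟨this, by omega⟩
        have := hsub hmem
        rw [Finset.mem_filter] at this
        exact this.2.2 rfl
  · intro v hv
    rw [Finset.mem_filter]
    refine ⟨Finset.mem_univ _, hF.1 v hv, ?_⟩
    intro hc
    obtain ⟨i, j⟩ := v
    simp only at hc
    subst hc
    exact (hjf i).2 hv
  · have hcard : (Finset.univ.filter fun v : (i : Fin c) × Fin (n i) =>
        t v.1 ≤ (v.2 : ℕ) ∧ v.2 ≠ jf v.1).card
        = ∑ i, ((n i - t i) - 1) := by
      rw [filter_sigma_card n (fun i j => t i ≤ (j : ℕ) ∧ j ≠ jf i)]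
      refine Finset.sum_congr rfl fun i _ => ?_
      have he : ((Finset.univ : Finset (Fin (n i))).filter
            fun j : Fin (n i) => t i ≤ (j : ℕ) ∧ j ≠ jf i)
          = ((Finset.univ : Finset (Fin (n i))).filter
            fun j : Fin (n i) => t i ≤ (j : ℕ)).erase (jf i) := by
        ext j
        simp only [Finset.mem_filter, Finset.mem_univ, true_and, Finset.mem_erase]
        tauto
      rw [he, Finset.card_erase_of_mem, card_filter_le_fin]
      rw [Finset.mem_filter]
      exact ⟨Finset.mem_univ _, (hjf i).1⟩
    rw [hcard, sum_sub_one]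
    intro i
    have h1 := (hjf i).1
    have h2 := (jf i).isLt
    omega

lemma PBox_eVec {t : Fin c → ℕ} (i₀ : Fin c) (hti : t i₀ < n i₀) :
    PBox n t (eVec i₀) = {⟨i₀, ⟨t i₀, hti⟩⟩} := by
  ext v
  obtain ⟨i, j⟩ := v
  rw [mem_PBox, Finset.mem_singleton]
  dsimp only
  constructor
  · rintro ⟨h1, h2⟩
    by_cases hi : i = i₀
    · subst hi
      have hj : j = ⟨t i, hti⟩ := by
        apply Fin.ext
        simp [eVec] at h2
        dsimp only
        omega
      rw [hj]
    · exfalso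
      simp only [eVec, if_neg hi] at h2
      omega
  · intro h
    have h1 : i = i₀ := congrArg Sigma.fst h
    subst h1
    have h2 : j = ⟨t i, hti⟩ := by
      simpa using h
    subst h2
    simp [eVec]

lemma KC_del (t : Fin c → ℕ) (B : Finset (Fin c → ℕ)) (i₀ : Fin c) (hti : t i₀ < n i₀)
    [DecidableEq (Fin c → ℕ)] [DecidablePred fun g : Fin c → ℕ => g i₀ = 0] :
    (KC n t B).del ⟨i₀, ⟨t i₀, hti⟩⟩ =
      KC n t ((B.filter fun g => g i₀ = 0) ∪ {eVec i₀}) := by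
  apply SComplex.ext_faces
  ext F
  show (F ∈ (KC n t B).faces ∧ _) ↔ _
  rw [mem_KC, mem_KC]
  constructor
  · rintro ⟨⟨h1, h2⟩, hx⟩
    refine ⟨h1, ?_⟩
    intro g hg
    rw [Finset.mem_union, Finset.mem_filter, Finset.mem_singleton] at hg
    rcases hg with ⟨hgB, -⟩ | rfl
    · exact h2 g hgB
    · rw [PBox_eVec n i₀ hti, Finset.singleton_subset_iff]
      exact hx
  · rintro ⟨h1, h2⟩
    have hx : (⟨i₀, ⟨t i₀, hti⟩⟩ : (i : Fin c) × Fin (n i)) ∉ F := by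
      have := h2 (eVec i₀) (by rw [Finset.mem_union, Finset.mem_singleton]; right; rfl)
      rw [PBox_eVec n i₀ hti, Finset.singleton_subset_iff] at this
      exact this
    refine ⟨⟨h1, ?_⟩, hx⟩
    intro g hgB hsub
    by_cases hg0 : g i₀ = 0
    · exact h2 g (by rw [Finset.mem_union, Finset.mem_filter]; left; exact ⟨hgB, hg0⟩) hsub
    · refine hx (hsub ?_)
      rw [mem_PBox]
      dsimp only
      omega

lemma KC_link (t : Fin c → ℕ) (B : Finset (Fin c → ℕ)) (i₀ : Fin c) (hti : t i₀ < n i₀)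
    [DecidableEq (Fin c → ℕ)] :
    (KC n t B).link ⟨i₀, ⟨t i₀, hti⟩⟩ =
      KC n (fun i => if i = i₀ then t i + 1 else t i)
        (B.image fun g i => if i = i₀ then g i - 1 else g i) := by
  set t' : Fin c → ℕ := fun i => if i = i₀ then t i + 1 else t i with ht'
  set dec : (Fin c → ℕ) → (Fin c → ℕ) := fun g i => if i = i₀ then g i - 1 else g i with hdec
  set x : (i : Fin c) × Fin (n i) := ⟨i₀, ⟨t i₀, hti⟩⟩ with hx
  have claimA : ∀ g : Fin c → ℕ, PBox n t' (dec g) ⊆ PBox n t g := by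
    rintro g ⟨i, j⟩ hv
    rw [mem_PBox] at hv ⊢
    dsimp only at hv ⊢
    by_cases hi : i = i₀
    · subst hi
      simp only [ht', hdec, if_pos rfl] at hv
      omega
    · simp only [ht', hdec, if_neg hi] at hv
      exact hv
  have claimB : ∀ g : Fin c → ℕ, x ∉ PBox n t' (dec g) := by
    intro g hmem
    rw [hx, mem_PBox] at hmem
    dsimp only at hmem
    simp only [ht', if_pos rfl] at hmem
    omega
  have claimC : ∀ g : Fin c → ℕ, PBox n t g ⊆ insert x (PBox n t' (dec g)) := by
    rintro g ⟨i, j⟩ hv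
    rw [mem_PBox] at hv
    dsimp only at hv
    rw [Finset.mem_insert]
    by_cases hi : i = i₀
    · subst hi
      by_cases hj : (j : ℕ) = t i
      · left
        rw [hx]
        have : j = ⟨t i, hti⟩ := by
          apply Fin.ext
          dsimp only
          omega
        rw [this]
      · right
        rw [mem_PBox]
        dsimp only
        simp only [ht', hdec, if_pos rfl]
        omega
    · right
      rw [mem_PBox]
      dsimp only
      simp only [ht', hdec, if_neg hi]
      exact hv
  apply SComplex.ext_faces
  ext F
  show (F ∈ (KC n t B).faces ∧ x ∉ F ∧ insert x F ∈ (KC n t B).faces) ↔ _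
  rw [mem_KC, mem_KC, mem_KC]
  constructor
  · rintro ⟨⟨hV, hB⟩, hxF, hV', hB'⟩
    constructor
    · rintro ⟨i, j⟩ hv
      by_cases hi : i = i₀
      · subst hi
        simp only [ht', if_pos rfl]
        have h1 := hV _ hv
        dsimp only at h1 ⊢
        have : (j : ℕ) ≠ t i := by
          intro hc
          have hj : j = ⟨t i, hti⟩ := by
            apply Fin.ext
            dsimp only
            omega
          rw [hj] at hv
          exact hxF (by rw [hx]; exact hv)
        omega
      · simp only [ht', if_neg hi]
        exact hV _ hv
    · intro h hh hsub
      rw [Finset.mem_image] at hh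
      obtain ⟨g, hgB, rfl⟩ := hh
      refine hB' g hgB ?_
      exact (claimC g).trans (Finset.insert_subset_insert _ hsub)
  · rintro ⟨hV, hB⟩
    have hxF : x ∉ F := by
      intro hc
      have := hV x hc
      simp only [hx, ht'] at this
      simp at this
      exact lt_irrefl _ this
    have hFV : ∀ v ∈ F, t v.1 ≤ (v.2 : ℕ) := by
      intro v hv
      have := hV v hv
      by_cases hi : v.1 = i₀
      · simp only [ht', if_pos hi] at this; omega
      · simpa only [ht', if_neg hi] using this
    have hBdec : ∀ g ∈ B, ¬ PBox n t' (dec g) ⊆ F := by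
      intro g hg
      exact hB (dec g) (Finset.mem_image_of_mem _ hg)
    refine ⟨⟨hFV, ?_⟩, hxF, ?_, ?_⟩
    · intro g hg hsub
      exact hBdec g hg ((claimA g).trans hsub)
    · intro v hv
      rw [Finset.mem_insert] at hv
      rcases hv with rfl | hv
      · exact le_rfl
      · exact hFV v hv
    · intro g hg hsub
      refine hBdec g hg ?_
      intro v hv
      have hvx : v ≠ x := fun hc => claimB g (hc ▸ hv)
      have := hsub (claimA g hv)
      rw [Finset.mem_insert] at this
      tauto

lemma KC_simplex (t : Fin c → ℕ) (A : Finset (Fin c → ℕ))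
    (hb : ∀ g ∈ A, ∀ i, t i + g i ≤ n i)
    (hA : ∀ g ∈ A, ∃ i, g = eVec i) (hall : ∀ i, eVec i ∈ A) :
    (KC n t A).faces
      = {F | F ⊆ Finset.univ.filter fun v : (i : Fin c) × Fin (n i) => t v.1 + 1 ≤ (v.2 : ℕ)} := by
  have hti : ∀ i, t i < n i := by
    intro i
    have := hb _ (hall i) i
    simp [eVec] at this
    omega
  ext F
  rw [Set.mem_setOf_eq, mem_KC]
  constructor
  · rintro ⟨hV, hB⟩
    rintro ⟨i, j⟩ hv
    rw [Finset.mem_filter]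
    refine ⟨Finset.mem_univ _, ?_⟩
    dsimp only
    have h1 := hV _ hv
    dsimp only at h1
    have h2 : (j : ℕ) ≠ t i := by
      intro hc
      refine hB (eVec i) (hall i) ?_
      rw [PBox_eVec n i (hti i), Finset.singleton_subset_iff]
      have : j = ⟨t i, hti i⟩ := by
        apply Fin.ext
        dsimp only
        omega
      rwa [← this]
    omega
  · intro hsub
    constructor
    · intro v hv
      have := hsub hv
      rw [Finset.mem_filter] at this
      omega
    · intro g hg hBox
      obtain ⟨i, rfl⟩ := hA g hg
      rw [PBox_eVec n i (hti i), Finset.singleton_subset_iff] at hBox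
      have := hsub hBox
      rw [Finset.mem_filter] at this
      dsimp only at this
      omega

lemma eVec_apply_self (i : Fin c) : eVec i i = 1 := by simp [eVec]

lemma eVec_apply_ne {i j : Fin c} (h : j ≠ i) : eVec i j = 0 := by simp [eVec, h]

lemma eVec_ne_zero (i : Fin c) : eVec i ≠ 0 := by
  intro h
  have := congrFun h i
  simp [eVec] at this

lemma sum_eVec (i : Fin c) : ∑ j, eVec i j = 1 := by simp [eVec]

lemma exists_ne_zero {g : Fin c → ℕ} (h : g ≠ 0) : ∃ i, g i ≠ 0 := by
  by_contra hc
  push_neg at hc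
  exact h (funext fun i => hc i)

lemma eq_eVec_of_sum_eq_one {g : Fin c → ℕ} (hg : g ≠ 0) (h : ∑ i, g i = 1) :
    ∃ i, g = eVec i := by
  obtain ⟨i, hi⟩ := exists_ne_zero hg
  refine ⟨i, funext fun j => ?_⟩
  have hsplit := Finset.add_sum_erase Finset.univ g (Finset.mem_univ i)
  have hz : ∀ j ∈ Finset.univ.erase i, g j = 0 := by
    intro j hj
    by_contra hj0
    have h2 : 1 ≤ g j := Nat.one_le_iff_ne_zero.2 hj0
    have h3 : g j ≤ ∑ x ∈ Finset.univ.erase i, g x :=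
      Finset.single_le_sum (fun _ _ => Nat.zero_le _) hj
    have h4 : 1 ≤ g i := Nat.one_le_iff_ne_zero.2 hi
    omega
  have hzero : ∑ x ∈ Finset.univ.erase i, g x = 0 := Finset.sum_eq_zero hz
  by_cases hji : j = i
  · subst hji
    rw [eVec_apply_self]
    omega
  · rw [eVec_apply_ne hji]
    exact hz j (Finset.mem_erase.2 ⟨hji, Finset.mem_univ _⟩)

lemma sum_image_le_nat {α β : Type*} [DecidableEq α] [DecidableEq β] (s : Finset α)
    (f : α → β) (w : β → ℕ) : ∑ b ∈ s.image f, w b ≤ ∑ a ∈ s, w (f a) := by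
  induction s using Finset.induction_on with
  | empty => simp
  | insert a s ha ih =>
    rw [Finset.image_insert, Finset.sum_insert ha]
    by_cases hfa : f a ∈ s.image f
    · rw [Finset.insert_eq_self.2 hfa]
      omega
    · rw [Finset.sum_insert hfa]
      omega

lemma sum_update_point {f f' : Fin c → ℕ} (i₀ : Fin c) (h : ∀ j, j ≠ i₀ → f' j = f j) :
    (∑ i, f' i) + f i₀ = (∑ i, f i) + f' i₀ := by
  rw [← Finset.add_sum_erase _ f (Finset.mem_univ i₀),
    ← Finset.add_sum_erase _ f' (Finset.mem_univ i₀),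
    Finset.sum_congr rfl (fun j hj => h j (Finset.mem_erase.1 hj).1)]
  ring

/-- total degree of the exponent vector `g`. -/
def sgw {c : ℕ} (g : Fin c → ℕ) : ℕ := ∑ i, g i

/-- total degree of the set of exponent vectors `A`. -/
def muw {c : ℕ} (A : Finset (Fin c → ℕ)) : ℕ := ∑ g ∈ A, sgw g

/-- decrease the `i₀` entry by one. -/
def decV (i₀ : Fin c) (g : Fin c → ℕ) : Fin c → ℕ := fun i => if i = i₀ then g i - 1 else g i

/-- increase the `i₀` entry by one. -/
def shiftT (i₀ : Fin c) (t : Fin c → ℕ) : Fin c → ℕ := fun i => if i = i₀ then t i + 1 else t i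

lemma KC_link' (t : Fin c → ℕ) (B : Finset (Fin c → ℕ)) (i₀ : Fin c) (hti : t i₀ < n i₀)
    [DecidableEq (Fin c → ℕ)] :
    (KC n t B).link ⟨i₀, ⟨t i₀, hti⟩⟩ = KC n (shiftT i₀ t) (B.image (decV i₀)) :=
  KC_link n t B i₀ hti

lemma sgw_eVec (i : Fin c) : sgw (eVec i) = 1 := sum_eVec i

lemma sgw_pos {g : Fin c → ℕ} (h : g ≠ 0) : 1 ≤ sgw g := by
  obtain ⟨i, hi⟩ := exists_ne_zero h
  show 1 ≤ ∑ i, g i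
  have h1 : g i ≤ ∑ i, g i :=
    Finset.single_le_sum (f := g) (fun _ _ => Nat.zero_le _) (Finset.mem_univ i)
  omega

lemma eq_eVec_of_sgw_eq_one {g : Fin c → ℕ} (hg : g ≠ 0) (h : sgw g = 1) :
    ∃ i, g = eVec i := eq_eVec_of_sum_eq_one hg h

lemma sgw_eq_zero {g : Fin c → ℕ} (h : sgw g = 0) : g = 0 := by
  funext i
  have h1 : ∑ i, g i = 0 := h
  exact (Finset.sum_eq_zero_iff.1 h1) i (Finset.mem_univ i)

lemma sgw_decV_le (i₀ : Fin c) (g : Fin c → ℕ) : sgw (decV i₀ g) ≤ sgw g := by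
  refine Finset.sum_le_sum fun i _ => ?_
  simp only [decV]
  split <;> omega

lemma sgw_decV {g : Fin c → ℕ} (i₀ : Fin c) (h : g i₀ ≠ 0) : sgw (decV i₀ g) + 1 = sgw g := by
  have h3 := sum_update_point (f := g) (f' := decV i₀ g) i₀
    (fun j hj => by simp [decV, hj])
  have h3' : (∑ i, decV i₀ g i) + g i₀ = (∑ i, g i) + decV i₀ g i₀ := h3
  have h4 : decV i₀ g i₀ = g i₀ - 1 := by simp [decV]
  have h5 : (∑ i, decV i₀ g i) = sgw (decV i₀ g) := rfl
  have h6 : (∑ i, g i) = sgw g := rfl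
  rw [h4, h5, h6] at h3'
  omega

lemma sgw_le_muw {A : Finset (Fin c → ℕ)} {g : Fin c → ℕ} (hg : g ∈ A) : sgw g ≤ muw A :=
  Finset.single_le_sum (f := sgw) (fun _ _ => Nat.zero_le _) hg

lemma muw_le_of_subset {A B : Finset (Fin c → ℕ)} (h : B ⊆ A) : muw B ≤ muw A :=
  Finset.sum_le_sum_of_subset h

lemma muw_image_lt {B : Finset (Fin c → ℕ)} [DecidableEq (Fin c → ℕ)]
    (f : (Fin c → ℕ) → (Fin c → ℕ))
    (hle : ∀ g ∈ B, sgw (f g) ≤ sgw g) {gs : Fin c → ℕ} (hgs : gs ∈ B)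
    (hlt : sgw (f gs) < sgw gs) : muw (B.image f) < muw B := by
  have h1 : muw (B.image f) ≤ ∑ g ∈ B, sgw (f g) := sum_image_le_nat B f sgw
  have h2 : (∑ g ∈ B, sgw (f g)) < ∑ g ∈ B, sgw g :=
    Finset.sum_lt_sum hle ⟨gs, hgs, hlt⟩
  exact lt_of_le_of_lt h1 h2

lemma muw_del_lt {B : Finset (Fin c → ℕ)} (i₀ : Fin c) [DecidableEq (Fin c → ℕ)]
    {gs : Fin c → ℕ} (hgs : gs ∈ B) (hgs0 : gs i₀ ≠ 0) (h2 : 2 ≤ sgw gs) :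
    muw ((B.filter fun g => g i₀ = 0) ∪ {eVec i₀}) < muw B := by
  set Bf := B.filter fun g => g i₀ = 0 with hBf
  have h0 : Bf ∪ {eVec i₀} = insert (eVec i₀) Bf := by
    rw [Finset.union_comm, ← Finset.insert_eq]
  have hnotin : eVec i₀ ∉ Bf := by
    intro hmem
    rw [hBf, Finset.mem_filter] at hmem
    have := hmem.2
    rw [eVec_apply_self] at this
    omega
  have h1 : muw (Bf ∪ {eVec i₀}) = sgw (eVec i₀) + muw Bf := by
    rw [h0]
    exact Finset.sum_insert hnotin
  have hsubE : Bf ⊆ B.erase gs := by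
    intro g hg
    rw [Finset.mem_erase]
    rw [hBf, Finset.mem_filter] at hg
    exact ⟨fun h => hgs0 (h ▸ hg.2), hg.1⟩
  have h3 : muw Bf ≤ muw (B.erase gs) := muw_le_of_subset hsubE
  have h4 : sgw gs + muw (B.erase gs) = muw B := Finset.add_sum_erase _ _ hgs
  have h5 : sgw (eVec i₀) = 1 := sgw_eVec i₀
  omega

theorem KC_VDec : ∀ (N : ℕ) (t : Fin c → ℕ) (A : Finset (Fin c → ℕ)),
    muw A ≤ N →
    (∀ g ∈ A, ∀ i, t i + g i ≤ n i) →
    (∀ g ∈ A, g ≠ 0) →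
    (∀ i, ∃ g ∈ A, (∀ j, j ≠ i → g j = 0) ∧ g i ≠ 0) →
    SComplex.VDec (KC n t A) ((∑ i, (n i - t i)) - c) := by
  classical
  intro N
  induction N with
  | zero =>
    intro t A hμ hb hne hprim
    have hA : A = ∅ := by
      rw [Finset.eq_empty_iff_forall_notMem]
      intro g hg
      refine hne g hg ?_
      have h1 : sgw g ≤ muw A := sgw_le_muw hg
      exact sgw_eq_zero (by omega)
    have hc0 : c = 0 := by
      by_contra hc
      obtain ⟨g, hg, -⟩ := hprim ⟨0, Nat.pos_of_ne_zero hc⟩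
      rw [hA] at hg
      exact absurd hg (Finset.notMem_empty _)
    subst hc0
    refine SComplex.VDec.simplex _ ∅ _ (by simp) ?_
    ext F
    rw [Set.mem_setOf_eq, mem_KC]
    constructor
    · intro _ v _
      exact v.1.elim0
    · intro _
      refine ⟨fun v _ => v.1.elim0, fun g hg => ?_⟩
      rw [hA] at hg
      exact absurd hg (Finset.notMem_empty _)
  | succ N ih =>
    intro t A hμ hb hne hprim
    set B := A.filter (fun g => (∀ i, eVec i ∈ A → g i = 0) ∨ ∃ i, g = eVec i) with hBdef
    have hBsub : B ⊆ A := Finset.filter_subset _ _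
    have hbB : ∀ g ∈ B, ∀ i, t i + g i ≤ n i := fun g hg => hb g (hBsub hg)
    have hneB : ∀ g ∈ B, g ≠ 0 := fun g hg => hne g (hBsub hg)
    have hprimB : ∀ i, ∃ g ∈ B, (∀ j, j ≠ i → g j = 0) ∧ g i ≠ 0 := by
      intro i
      by_cases he : eVec i ∈ A
      · refine ⟨eVec i, ?_, fun j hj => eVec_apply_ne hj,
          by rw [eVec_apply_self]; exact Nat.one_ne_zero⟩
        rw [hBdef, Finset.mem_filter]
        exact ⟨he, Or.inr ⟨i, rfl⟩⟩
      · obtain ⟨g, hg, hp, hi⟩ := hprim i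
        refine ⟨g, ?_, hp, hi⟩
        rw [hBdef, Finset.mem_filter]
        refine ⟨hg, Or.inl fun i' hi' => ?_⟩
        rcases eq_or_ne i' i with rfl | hne'
        · exact absurd hi' he
        · exact hp i' hne'
    have hKB : KC n t A = KC n t B := by
      apply SComplex.ext_faces
      ext F
      rw [mem_KC, mem_KC]
      constructor
      · rintro ⟨h1, h2⟩
        exact ⟨h1, fun g hg => h2 g (hBsub hg)⟩
      · rintro ⟨h1, h2⟩
        refine ⟨h1, fun g hg hsub => ?_⟩
        by_cases hgB : g ∈ B
        · exact h2 g hgB hsub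
        · have hex' : ∃ i, eVec i ∈ A ∧ g i ≠ 0 := by
            rw [hBdef, Finset.mem_filter] at hgB
            push_neg at hgB
            obtain ⟨i, hi1, hi2⟩ := (hgB hg).1
            exact ⟨i, hi1, hi2⟩
          obtain ⟨i, hiA, hgi⟩ := hex'
          have heB : eVec i ∈ B := by
            rw [hBdef, Finset.mem_filter]
            exact ⟨hiA, Or.inr ⟨i, rfl⟩⟩
          refine h2 (eVec i) heB ((PBox_mono n fun j => ?_).trans hsub)
          by_cases hji : j = i
          · subst hji
            rw [eVec_apply_self]
            omega
          · rw [eVec_apply_ne hji]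
            omega
    have hμB : muw B ≤ muw A := muw_le_of_subset hBsub
    rw [hKB]
    by_cases hbase : ∀ g ∈ B, ∃ i, g = eVec i
    · -- base case: the complex is a simplex
      have hall : ∀ i, eVec i ∈ B := by
        intro i
        obtain ⟨g, hgB, hp, hi⟩ := hprimB i
        obtain ⟨i', rfl⟩ := hbase g hgB
        have hii : i' = i := by
          by_contra hii
          exact hi (eVec_apply_ne fun h => hii h.symm)
        subst hii
        exact hgB
      have hti : ∀ i, t i < n i := by
        intro i
        have := hbB _ (hall i) i
        rw [eVec_apply_self] at this
        omega
      refine SComplex.VDec.simplex _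
        (Finset.univ.filter fun v : (i : Fin c) × Fin (n i) => t v.1 + 1 ≤ (v.2 : ℕ)) _ ?_
        (KC_simplex n t B hbB hbase hall)
      rw [filter_sigma_card n (fun i j => t i + 1 ≤ (j : ℕ))]
      have h1 : ∀ i : Fin c,
          ((Finset.univ : Finset (Fin (n i))).filter fun j : Fin (n i) => t i + 1 ≤ (j : ℕ)).card
            = (n i - t i) - 1 := by
        intro i
        rw [card_filter_le_fin (n i) (t i + 1)]
        omega
      rw [Finset.sum_congr rfl fun i _ => h1 i, sum_sub_one]
      intro i
      have := hti i
      omega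
    · -- inductive step
      push_neg at hbase
      obtain ⟨gs, hgsB, hgsne⟩ := hbase
      have hgs0 : gs ≠ 0 := hneB _ hgsB
      have hsum2 : 2 ≤ sgw gs := by
        have hsum1 : 1 ≤ sgw gs := sgw_pos hgs0
        rcases Nat.lt_or_ge (sgw gs) 2 with h | h
        · have h1 : sgw gs = 1 := by omega
          obtain ⟨i, rfl⟩ := eq_eVec_of_sgw_eq_one hgs0 h1
          exact absurd rfl (hgsne i)
        · exact h
      obtain ⟨i₀, hi₀⟩ := exists_ne_zero hgs0
      have heB : ∀ g ∈ B, g ≠ eVec i₀ := by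
        intro g hgB hg
        subst hg
        have hA' : eVec i₀ ∈ A := hBsub hgB
        have hgsB' := hgsB
        rw [hBdef, Finset.mem_filter] at hgsB'
        rcases hgsB'.2 with h | ⟨i, hgi⟩
        · exact hi₀ (h i₀ hA')
        · exact hgsne i hgi
      have hti₀ : t i₀ < n i₀ := by
        obtain ⟨g, hgB, hp, hgi⟩ := hprimB i₀
        have := hbB g hgB i₀
        omega
      apply SComplex.VDec.step _ _ (⟨i₀, ⟨t i₀, hti₀⟩⟩ : (i : Fin c) × Fin (n i))
      · exact KC_pure n t B hbB hprimB
      · -- the link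
        rw [KC_link' n t B i₀ hti₀]
        have hkey : (∑ i, (n i - shiftT i₀ t i)) + 1 = ∑ i, (n i - t i) := by
          have h1 := sum_update_point (f := fun i => n i - t i)
            (f' := fun i => n i - shiftT i₀ t i) i₀ (fun j hj => by simp [shiftT, hj])
          have h1' : (∑ i, (n i - shiftT i₀ t i)) + (n i₀ - t i₀)
              = (∑ i, (n i - t i)) + (n i₀ - shiftT i₀ t i₀) := h1
          have h2 : shiftT i₀ t i₀ = t i₀ + 1 := by simp [shiftT]
          rw [h2] at h1'
          omega
        have hμ' : muw (B.image (decV i₀)) ≤ N := by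
          have hlt : muw (B.image (decV i₀)) < muw B := by
            refine muw_image_lt (decV i₀) (fun g _ => sgw_decV_le i₀ g) hgsB ?_
            have := sgw_decV i₀ hi₀
            omega
          exact Nat.lt_succ_iff.mp (lt_of_lt_of_le hlt (hμB.trans hμ))
        have hb' : ∀ h ∈ B.image (decV i₀), ∀ i, shiftT i₀ t i + h i ≤ n i := by
          intro h hh i
          rw [Finset.mem_image] at hh
          obtain ⟨g, hgB, rfl⟩ := hh
          by_cases hi : i = i₀
          · subst hi
            have := hbB g hgB i
            have h2 : t i < n i := hti₀
            simp [shiftT, decV]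
            omega
          · simp only [shiftT, decV, if_neg hi]
            exact hbB g hgB i
        have hne' : ∀ h ∈ B.image (decV i₀), h ≠ 0 := by
          intro h hh h0
          rw [Finset.mem_image] at hh
          obtain ⟨g, hgB, rfl⟩ := hh
          have hj : ∀ j, decV i₀ g j = 0 := fun j => by
            have := congrFun h0 j
            simpa using this
          refine heB g hgB (funext fun j => ?_)
          by_cases hji : j = i₀
          · subst hji
            rw [eVec_apply_self]
            have h1 := hj j
            simp [decV] at h1
            have h2 : ∀ j', j' ≠ j → g j' = 0 := by
              intro j' hj'
              have := hj j'
              simpa only [decV, if_neg hj'] using this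
            have h3 : g j ≠ 0 := by
              intro h4
              refine hneB g hgB (funext fun j' => ?_)
              rcases eq_or_ne j' j with rfl | hj'
              · exact h4
              · exact h2 j' hj'
            omega
          · rw [eVec_apply_ne hji]
            have := hj j
            simpa only [decV, if_neg hji] using this
        have hprim' : ∀ i, ∃ h ∈ B.image (decV i₀), (∀ j, j ≠ i → h j = 0) ∧ h i ≠ 0 := by
          intro i
          obtain ⟨g, hgB, hp, hgi⟩ := hprimB i
          refine ⟨decV i₀ g, Finset.mem_image_of_mem _ hgB, ?_, ?_⟩
          · intro j hj
            by_cases hji : j = i₀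
            · subst hji
              simp [decV, hp j hj]
            · simp only [decV, if_neg hji]
              exact hp j hj
          · by_cases hii : i = i₀
            · subst hii
              have hg2 : g i ≠ 1 := by
                intro h1
                refine heB g hgB (funext fun j => ?_)
                rcases eq_or_ne j i with rfl | hj
                · rw [eVec_apply_self]
                  exact h1
                · rw [eVec_apply_ne hj]
                  exact hp j hj
              have hgi' := hgi
              simp [decV]
              omega
            · simp only [decV, if_neg hii]
              exact hgi
        have hres := ih (shiftT i₀ t) (B.image (decV i₀)) hμ' hb' hne' hprim'
        have hval : (∑ i, (n i - t i)) - c - 1 = (∑ i, (n i - shiftT i₀ t i)) - c := by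
          omega
        rw [hval]
        exact hres
      · -- the deletion
        rw [KC_del n t B i₀ hti₀]
        apply ih t ((B.filter fun g => g i₀ = 0) ∪ {eVec i₀})
        · have hlt := muw_del_lt i₀ hgsB hi₀ hsum2
          exact Nat.lt_succ_iff.mp (lt_of_lt_of_le hlt (hμB.trans hμ))
        · intro g hg i
          rw [Finset.mem_union, Finset.mem_singleton] at hg
          rcases hg with hg | rfl
          · exact hbB g (Finset.mem_filter.1 hg).1 i
          · by_cases hi : i = i₀
            · subst hi
              rw [eVec_apply_self]
              omega
            · rw [eVec_apply_ne hi]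
              obtain ⟨g', hg'B, hp', hgi'⟩ := hprimB i
              have := hbB g' hg'B i
              omega
        · intro g hg
          rw [Finset.mem_union, Finset.mem_singleton] at hg
          rcases hg with hg | rfl
          · exact hneB g (Finset.mem_filter.1 hg).1
          · exact eVec_ne_zero i₀
        · intro i
          by_cases hi : i = i₀
          · subst hi
            refine ⟨eVec i, ?_, fun j hj => eVec_apply_ne hj,
              by rw [eVec_apply_self]; exact Nat.one_ne_zero⟩
            rw [Finset.mem_union, Finset.mem_singleton]
            right
            rfl
          · obtain ⟨g, hgB, hp, hgi⟩ := hprimB i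
            refine ⟨g, ?_, hp, hgi⟩
            rw [Finset.mem_union]
            left
            rw [Finset.mem_filter]
            exact ⟨hgB, hp i₀ fun h => hi h.symm⟩

lemma prod_X_eq_monomial_ind {σ : Type*} [DecidableEq σ] {R : Type*} [CommSemiring R]
    (F : Finset σ) :
    (∏ v ∈ F, (X v : MvPolynomial σ R)) = monomial (∑ v ∈ F, Finsupp.single v 1) 1 := by
  induction F using Finset.induction_on with
  | empty => simp
  | insert a s ha ih =>
    rw [Finset.prod_insert ha, ih, Finset.sum_insert ha,
      show (X a : MvPolynomial σ R) = monomial (Finsupp.single a 1) 1 from rfl,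
      monomial_mul, one_mul]

lemma ind_apply {σ : Type*} [DecidableEq σ] (S : Finset σ) (w : σ) :
    (∑ v ∈ S, Finsupp.single v 1 : σ →₀ ℕ) w = if w ∈ S then 1 else 0 := by
  rw [Finsupp.finset_sum_apply]
  simp [Finsupp.single_apply]

lemma ind_le_iff {σ : Type*} [DecidableEq σ] (S T : Finset σ) :
    (∑ v ∈ S, Finsupp.single v 1 : σ →₀ ℕ) ≤ ∑ v ∈ T, Finsupp.single v 1 ↔ S ⊆ T := by
  rw [Finsupp.le_def]
  constructor
  · intro h v hv
    have := h v
    rw [ind_apply, ind_apply, if_pos hv] at this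
    by_contra hvT
    rw [if_neg hvT] at this
    omega
  · intro h w
    rw [ind_apply, ind_apply]
    by_cases hw : w ∈ S
    · rw [if_pos hw, if_pos (h hw)]
    · rw [if_neg hw]
      exact Nat.zero_le _

lemma prod_mem_span_iff (A : Finset (Fin c → ℕ)) (F : Finset ((i : Fin c) × Fin (n i))) :
    (∏ v ∈ F, (X v : MvPolynomial ((i : Fin c) × Fin (n i)) k))
        ∈ Ideal.span ((fun g => ∏ v ∈ polSupp n g, X v) '' (A : Set (Fin c → ℕ)))
      ↔ ∃ g ∈ A, polSupp n g ⊆ F := by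
  classical
  have himg : ((fun g => ∏ v ∈ polSupp n g, (X v : MvPolynomial ((i : Fin c) × Fin (n i)) k))
        '' (A : Set (Fin c → ℕ)))
      = ((fun s => monomial s (1 : k))
        '' ((fun g => ∑ v ∈ polSupp n g, Finsupp.single v 1) '' (A : Set (Fin c → ℕ)))) := by
    rw [Set.image_image]
    exact Set.image_congr fun g _ => prod_X_eq_monomial_ind _
  rw [himg, prod_X_eq_monomial_ind, mem_ideal_span_monomial_image]
  have hsupp : (monomial (∑ v ∈ F, Finsupp.single v 1) (1 : k)).support
      = {∑ v ∈ F, Finsupp.single v 1} := by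
    rw [support_monomial, if_neg one_ne_zero]
  rw [hsupp]
  constructor
  · intro h
    obtain ⟨si, hsi, hle⟩ := h _ (Finset.mem_singleton_self _)
    obtain ⟨g, hgA, rfl⟩ := hsi
    exact ⟨g, hgA, (ind_le_iff _ _).1 hle⟩
  · rintro ⟨g, hgA, hsub⟩ m hm
    rw [Finset.mem_singleton] at hm
    subst hm
    exact ⟨_, ⟨g, hgA, rfl⟩, (ind_le_iff _ _).2 hsub⟩

lemma polSupp_eq_PBox (g : Fin c → ℕ) : polSupp n g = PBox n (fun _ => 0) g := by
  ext v
  simp [polSupp, PBox]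

end Aux

/-- Stanley–Reisner complexes of polarizations of primary monomial
ideals are vertex-decomposable.  Here `A` is the set of exponent vectors of the
minimal generators of a monomial ideal `𝔞` in `k[x₁, …, x_c]`, primary to the
maximal ideal `(x₁, …, x_c)` (each variable admits a pure power among the
generators), `I` is the polarization of `𝔞`, and `Δ` is its Stanley–Reisner
complex. -/
theorem SR_of_polarization_of_primary_is_vertexDecomposable
    (A : Finset (Fin c → ℕ))
    (hbound : ∀ g ∈ A, ∀ i, g i ≤ n i)
    (hne : ∀ g ∈ A, g ≠ 0)
    (hmin : ∀ g ∈ A, ∀ g' ∈ A, g ≤ g' → g = g')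
    (hprimary : ∀ i, ∃ g ∈ A, (∀ j, j ≠ i → g j = 0) ∧ g i ≠ 0)
    (I : Ideal (MvPolynomial ((i : Fin c) × Fin (n i)) k))
    (hI : I = Ideal.span ((fun g => ∏ v ∈ polSupp n g, X v) '' A))
    (Δ : SComplex ((i : Fin c) × Fin (n i)))
    (hΔ : Δ.faces = {F | (∏ v ∈ F, (X v : MvPolynomial ((i : Fin c) × Fin (n i)) k)) ∉ I}) :
    Δ.VertexDecomposable := by
    classical
  have hfaces : Δ = KC n (fun _ => 0) A := by
    apply SComplex.ext_faces
    rw [hΔ]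
    ext F
    rw [Set.mem_setOf_eq, mem_KC]
    constructor
    · intro h
      refine ⟨fun v _ => Nat.zero_le _, fun g hg hsub => h ?_⟩
      rw [hI, prod_mem_span_iff]
      exact ⟨g, hg, by rwa [polSupp_eq_PBox]⟩
    · rintro ⟨-, h2⟩ hmem
      rw [hI, prod_mem_span_iff] at hmem
      obtain ⟨g, hg, hsub⟩ := hmem
      exact h2 g hg (by rwa [← polSupp_eq_PBox])
  rw [hfaces]
  exact ⟨_, KC_VDec n (muw A) (fun _ => 0) A le_rfl
    (fun g hg i => by simpa using hbound g hg i) hne hprimary⟩
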